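/- Let r : [0,1] × [0,2π) → ℝ be a Lebesgue-measurable function and assume: for every τ ∈ (0,1) there exists γ > 0 such that for all φ ∈ [0,2π) and all t₁, t₂ ∈ [0,τ], |r(t₂,φ) − r(t₁,φ)| ≥ γ·|t₂ − t₁|. Define g : [0,1] × [0,2π) → ℝ² by g(t,φ) = (r(t,φ), φ). Then for every set A ⊆ ℝ² of two-dimensional Lebesgue measure zero, the set g⁻¹(A) = {(t,φ) ∈ [0,1) × [0,2π) : (r(t,φ), φ) ∈ A} has two-dimensional Lebesgue measure zero. -/

import Mathlib

open Set MeasureTheory Real Function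

/-- 1-D key lemma: an expansive (reverse-Lipschitz) function on a set pulls back
null sets to null sets. -/
theorem slice_null {s : ℝ → ℝ} {T : Set ℝ} {γ : ℝ} (hγ : 0 < γ)
    (hexp : ∀ t₁ ∈ T, ∀ t₂ ∈ T, γ * |t₂ - t₁| ≤ |s t₂ - s t₁|)
    {N : Set ℝ} (hN : volume N = 0) :
    volume {t ∈ T | s t ∈ N} = 0 := by
  have hinj : InjOn s T := by
    intro a ha b hb hab
    by_contra hne
    have h1 := hexp a ha b hb
    rw [hab] at h1
    simp only [sub_self, abs_zero] at h1
    have : 0 < γ * |b - a| := mul_pos hγ (abs_pos.mpr (sub_ne_zero.mpr (Ne.symm hne)))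
    linarith
  set f := Function.invFunOn s T with hf
  have hmem : ∀ y ∈ s '' T, f y ∈ T ∧ s (f y) = y := fun y hy =>
    ⟨Function.invFunOn_mem (by rwa [mem_image] at hy),
     Function.invFunOn_eq (by rwa [mem_image] at hy)⟩
  have hlip : LipschitzOnWith (Real.toNNReal γ⁻¹) f (s '' T) := by
    apply LipschitzOnWith.of_dist_le_mul
    intro y₁ hy₁ y₂ hy₂
    obtain ⟨h1T, h1e⟩ := hmem y₁ hy₁
    obtain ⟨h2T, h2e⟩ := hmem y₂ hy₂
    have := hexp (f y₂) h2T (f y₁) h1T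
    rw [h1e, h2e] at this
    rw [Real.dist_eq, Real.dist_eq, Real.coe_toNNReal _ (by positivity)]
    rw [inv_mul_eq_div, le_div_iff₀ hγ, mul_comm]
    exact this
  have hsub : {t ∈ T | s t ∈ N} ⊆ f '' (N ∩ s '' T) := by
    rintro t ⟨htT, htN⟩
    refine ⟨s t, ⟨htN, mem_image_of_mem s htT⟩, ?_⟩
    obtain ⟨hfT, hfe⟩ := hmem (s t) (mem_image_of_mem s htT)
    exact hinj hfT htT hfe
  have h0 : volume (f '' (N ∩ s '' T)) = 0 := by
    have hH : (μH[1] : Measure ℝ) = volume := MeasureTheory.hausdorffMeasure_real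
    have hkey := ((hlip.mono (inter_subset_right (s := N))).hausdorffMeasure_image_le
      (d := 1) zero_le_one)
    rw [hH] at hkey
    refine le_antisymm (hkey.trans ?_) zero_le
    have : volume (N ∩ s '' T) = 0 :=
      measure_mono_null inter_subset_left hN
    rw [this, mul_zero]
  exact measure_mono_null hsub h0

theorem preimage_of_null_is_null
    (r : ℝ × ℝ → ℝ) (hmeas : Measurable r)
    (hexp : ∀ τ ∈ Ioo (0:ℝ) 1, ∃ γ > (0:ℝ),
      ∀ φ ∈ Ico (0:ℝ) (2 * π), ∀ t₁ ∈ Icc (0:ℝ) τ, ∀ t₂ ∈ Icc (0:ℝ) τ,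
        γ * |t₂ - t₁| ≤ |r (t₂, φ) - r (t₁, φ)|) :
    ∀ A : Set (ℝ × ℝ), volume A = 0 →
      volume {p : ℝ × ℝ | p.1 ∈ Ico (0:ℝ) 1 ∧ p.2 ∈ Ico (0:ℝ) (2 * π) ∧
        (r p, p.2) ∈ A} = 0 := by
  intro A hA
  -- replace A by a measurable null superset B
  obtain ⟨B, hAB, hBmeas, hB0⟩ := exists_measurable_superset_of_null hA
  refine measure_mono_null (t := {p : ℝ × ℝ | p.1 ∈ Ico (0:ℝ) 1 ∧ p.2 ∈ Ico (0:ℝ) (2 * π) ∧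
    (r p, p.2) ∈ B}) (fun p hp => ⟨hp.1, hp.2.1, hAB hp.2.2⟩) ?_
  -- a.e. slices of B are null
  have hBswap : volume (Prod.swap ⁻¹' B : Set (ℝ × ℝ)) = 0 := by
    have hmp : MeasurePreserving (Prod.swap : ℝ × ℝ → ℝ × ℝ) volume volume := by
      exact MeasureTheory.Measure.measurePreserving_swap
    rw [hmp.measure_preimage hBmeas.nullMeasurableSet]
    exact hB0
  rw [MeasureTheory.Measure.volume_eq_prod ℝ ℝ] at hBswap
  have hslice : ∀ᵐ φ : ℝ, volume {x : ℝ | (x, φ) ∈ B} = 0 := by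
    have := MeasureTheory.Measure.measure_ae_null_of_prod_null hBswap
    filter_upwards [this] with φ hφ
    convert hφ using 2 <;> rfl
  -- the target set, swapped
  set S : Set (ℝ × ℝ) := {p : ℝ × ℝ | p.1 ∈ Ico (0:ℝ) 1 ∧ p.2 ∈ Ico (0:ℝ) (2 * π) ∧
    (r p, p.2) ∈ B} with hS
  have hSmeas : MeasurableSet S := by
    have : S = (Ico (0:ℝ) 1 ×ˢ Ico (0:ℝ) (2 * π)) ∩
        ((fun p : ℝ × ℝ => (r p, p.2)) ⁻¹' B) := by
      ext p; simp [hS, Set.mem_prod, and_assoc]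
    rw [this]
    exact ((measurableSet_Ico.prod measurableSet_Ico)).inter
      ((hmeas.prodMk measurable_snd) hBmeas)
  have hmp : MeasurePreserving (Prod.swap : ℝ × ℝ → ℝ × ℝ) volume volume := by
    exact MeasureTheory.Measure.measurePreserving_swap
  have hswapvol : volume S = volume (Prod.swap ⁻¹' S : Set (ℝ × ℝ)) := by
    rw [hmp.measure_preimage hSmeas.nullMeasurableSet]
  rw [hswapvol, MeasureTheory.Measure.volume_eq_prod ℝ ℝ]
  rw [MeasureTheory.Measure.measure_prod_null (MeasurableSet.preimage hSmeas measurable_swap)]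
  filter_upwards [hslice] with φ hφ
  -- slice of S at φ
  have hset : (Prod.mk φ ⁻¹' (Prod.swap ⁻¹' S)) =
      {t : ℝ | t ∈ Ico (0:ℝ) 1 ∧ φ ∈ Ico (0:ℝ) (2 * π) ∧ r (t, φ) ∈ {x : ℝ | (x, φ) ∈ B}} := by
    ext t; simp [hS, Prod.swap]
  rw [hset]
  by_cases hφIco : φ ∈ Ico (0:ℝ) (2 * π)
  · -- cover [0,1) by the Icc 0 (1 - 1/(n+2))
    have hcover : {t : ℝ | t ∈ Ico (0:ℝ) 1 ∧ φ ∈ Ico (0:ℝ) (2 * π) ∧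
        r (t, φ) ∈ {x : ℝ | (x, φ) ∈ B}} ⊆
        ⋃ n : ℕ, {t ∈ Icc (0:ℝ) (1 - 1/(n+2)) | r (t, φ) ∈ {x : ℝ | (x, φ) ∈ B}} := by
      rintro t ⟨⟨ht0, ht1⟩, -, htB⟩
      obtain ⟨n, hn⟩ := exists_nat_gt (1 / (1 - t))
      refine mem_iUnion.mpr ⟨n, ⟨ht0, ?_⟩, htB⟩
      have h1t : 0 < 1 - t := by linarith
      rw [div_lt_iff₀ h1t] at hn
      have hn2 : 1 / ((n:ℝ) + 2) ≤ 1 - t := by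
        rw [div_le_iff₀ (by positivity)]
        nlinarith [h1t]
      linarith
    refine measure_mono_null hcover (measure_iUnion_null fun n => ?_)
    have hτ : (1 - 1/((n:ℝ)+2)) ∈ Ioo (0:ℝ) 1 := by
      constructor
      · have : 1/((n:ℝ)+2) ≤ 1/2 := by
          apply div_le_div_of_nonneg_left one_pos.le two_pos; linarith [Nat.cast_nonneg (α := ℝ) n]
        linarith
      · have : 0 < 1/((n:ℝ)+2) := by positivity
        linarith
    obtain ⟨γ, hγ, hγexp⟩ := hexp _ hτ
    exact slice_null hγ (fun t₁ h₁ t₂ h₂ => hγexp φ hφIco t₁ h₁ t₂ h₂) hφ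
  · convert measure_empty (μ := volume)
    ext t; simp only [mem_setOf_eq, mem_empty_iff_false, iff_false]
    rintro ⟨-, h, -⟩; exact hφIco h
    rfl
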